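/- Fix an integer n ≥ 1 and for each integer e ≥ 1 define the rational number A(e) := (∏_{i=1}^{e} (n+e+i)) / (∏_{i=1}^{e} (e+i)) − (n+1). Then A(e+1) > A(e) for every integer e ≥ 1. -/

import Mathlib

open Finset

/-- A(e) = (∏_{i=1}^{e} (n+e+i)) / (∏_{i=1}^{e} (e+i)) − (n+1), as a rational number. -/
def A (n e : ℕ) : ℚ :=
  (∏ i ∈ Finset.Icc 1 e, ((n : ℚ) + e + i)) / (∏ i ∈ Finset.Icc 1 e, ((e : ℚ) + i))
    - (n + 1)

theorem stmt_1 (n : ℕ) (hn : 1 ≤ n) (e : ℕ) (he : 1 ≤ e) :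
    A n e < A n (e + 1) := by
  have hrange : ∀ (k : ℕ) (f : ℕ → ℚ), (∏ i ∈ Icc 1 k, f i) = ∏ i ∈ range k, f (1 + i) := by
    intro k f
    rw [show Icc 1 k = Ico 1 (k+1) by rfl, Finset.prod_Ico_eq_prod_range]
    simp
  have key : ∀ c : ℚ,
      (∏ i ∈ range (e+1), (c + ((e:ℚ)+1) + (1 + (i:ℚ)))) * (c + e + 1)
      = (∏ i ∈ range e, (c + (e:ℚ) + (1 + (i:ℚ)))) * (c + 2*e + 1) * (c + 2*e + 2) := by
    intro c
    set f : ℕ → ℚ := fun j => c + e + (1 + j) with hf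
    have h0 : (∏ i ∈ range (e+1), (c + ((e:ℚ)+1) + (1 + (i:ℚ))))
        = ∏ i ∈ range (e+1), f (i+1) := by
      refine Finset.prod_congr rfl fun i _ => ?_
      simp only [hf]; push_cast; ring
    have h1 : (∏ i ∈ range (e+1), f (i+1)) * f 0 = ∏ i ∈ range (e+2), f i :=
      (Finset.prod_range_succ' f (e+1)).symm
    have hf0 : f 0 = c + e + 1 := by simp [hf]
    rw [h0, ← hf0, h1, Finset.prod_range_succ, Finset.prod_range_succ]
    have : ∀ i : ℕ, f i = c + (e:ℚ) + (1 + (i:ℚ)) := fun i => rfl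
    rw [Finset.prod_congr rfl fun i _ => this i]
    simp only [hf]; push_cast; ring
  unfold A
  rw [hrange e, hrange e, hrange (e+1), hrange (e+1)]
  push_cast
  have hn' : (1:ℚ) ≤ n := by exact_mod_cast hn
  have he' : (1:ℚ) ≤ e := by exact_mod_cast he
  set P := ∏ i ∈ range e, ((n:ℚ) + e + (1 + i)) with hP
  set Q := ∏ i ∈ range e, ((e:ℚ) + (1 + i)) with hQ
  set P' := ∏ i ∈ range (e+1), ((n:ℚ) + ((e:ℚ)+1) + (1 + i)) with hP'
  set Q' := ∏ i ∈ range (e+1), (((e:ℚ)+1) + (1 + i)) with hQ'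
  have hPpos : 0 < P := by
    refine Finset.prod_pos fun i _ => ?_
    have : (0:ℚ) ≤ i := Nat.cast_nonneg i
    have : (0:ℚ) ≤ n := Nat.cast_nonneg n
    linarith [Nat.cast_nonneg (α := ℚ) i]
  have hQpos : 0 < Q := by
    refine Finset.prod_pos fun i _ => ?_
    linarith [Nat.cast_nonneg (α := ℚ) i]
  have hP'pos : 0 < P' := by
    refine Finset.prod_pos fun i _ => ?_
    have : (0:ℚ) ≤ n := Nat.cast_nonneg n
    linarith [Nat.cast_nonneg (α := ℚ) i]
  have hQ'pos : 0 < Q' := by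
    refine Finset.prod_pos fun i _ => ?_
    linarith [Nat.cast_nonneg (α := ℚ) i]
  have hkeyP : P' * ((n:ℚ) + e + 1) = P * ((n:ℚ) + 2*e + 1) * ((n:ℚ) + 2*e + 2) :=
    key n
  have hkeyQ : Q' * ((e:ℚ) + 1) = Q * (2*(e:ℚ) + 1) * (2*(e:ℚ) + 2) := by
    have := key 0
    simp only [zero_add] at this
    linarith [this]
  rw [sub_lt_sub_iff_right, div_lt_div_iff₀ hQpos hQ'pos]
  have hc : (0:ℚ) < ((n:ℚ)+e+1)*((e:ℚ)+1) := by nlinarith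
  rw [← mul_lt_mul_iff_of_pos_right hc]
  have hL : P * Q' * (((n:ℚ)+e+1)*((e:ℚ)+1))
      = (P*Q) * (((n:ℚ)+e+1)*((2*(e:ℚ)+1)*(2*(e:ℚ)+2))) := by
    linear_combination (P*((n:ℚ)+e+1)) * hkeyQ
  have hR : P' * Q * (((n:ℚ)+e+1)*((e:ℚ)+1))
      = (P*Q) * (((e:ℚ)+1)*(((n:ℚ)+2*e+1)*((n:ℚ)+2*e+2))) := by
    linear_combination (Q*((e:ℚ)+1)) * hkeyP
  rw [hL, hR]
  have hD : ((n:ℚ)+e+1)*((2*(e:ℚ)+1)*(2*(e:ℚ)+2))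
      < ((e:ℚ)+1)*(((n:ℚ)+2*e+1)*((n:ℚ)+2*e+2)) := by
    nlinarith [mul_pos (mul_pos (show (0:ℚ) < n by linarith) (show (0:ℚ) < (n:ℚ)+1 by linarith)) (show (0:ℚ) < (e:ℚ)+1 by linarith)]
  exact mul_lt_mul_of_pos_left hD (mul_pos hPpos hQpos)
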